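/- For every solution of the four-body system, the quantity I(t) = r₁₃(t) · r₂₄(t) + (1/(m²ω²)) p₁₃(t) · p₂₄(t) is a global integral of motion: I(t) = I(0) for all t ∈ ℝ. -/

import Mathlib

noncomputable section

/-- The Euclidean plane. -/
abbrev Plane : Type := EuclideanSpace ℝ (Fin 2)

/-- A solution of the planar four-body system with pairwise quadratic potential
`V = (mω²/4)(2‖r₁−r₂‖² + 2‖r₂−r₃‖² + 2‖r₃−r₄‖² + 2‖r₁−r₄‖² − ‖r₁−r₃‖² − ‖r₂−r₄‖²)`:
four twice differentiable curves satisfying Newton's equations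
`rᵢ'' = −ω²((rᵢ − r_{i+1}) + (rᵢ − r_{i−1}) − ½(rᵢ − r_{i+2}))` (indices mod 4). -/
def IsFourBodySolution (ω : ℝ) (r₁ r₂ r₃ r₄ : ℝ → Plane) : Prop :=
  (Differentiable ℝ r₁ ∧ Differentiable ℝ (deriv r₁)) ∧
  (Differentiable ℝ r₂ ∧ Differentiable ℝ (deriv r₂)) ∧
  (Differentiable ℝ r₃ ∧ Differentiable ℝ (deriv r₃)) ∧
  (Differentiable ℝ r₄ ∧ Differentiable ℝ (deriv r₄)) ∧
  (∀ t : ℝ, deriv (deriv r₁) t =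
    (-(ω ^ 2)) • ((r₁ t - r₂ t) + (r₁ t - r₄ t) - (1 / 2 : ℝ) • (r₁ t - r₃ t))) ∧
  (∀ t : ℝ, deriv (deriv r₂) t =
    (-(ω ^ 2)) • ((r₂ t - r₃ t) + (r₂ t - r₁ t) - (1 / 2 : ℝ) • (r₂ t - r₄ t))) ∧
  (∀ t : ℝ, deriv (deriv r₃) t =
    (-(ω ^ 2)) • ((r₃ t - r₄ t) + (r₃ t - r₂ t) - (1 / 2 : ℝ) • (r₃ t - r₁ t))) ∧
  (∀ t : ℝ, deriv (deriv r₄) t =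
    (-(ω ^ 2)) • ((r₄ t - r₁ t) + (r₄ t - r₃ t) - (1 / 2 : ℝ) • (r₄ t - r₂ t)))

/-- The quantity
`I = r₁₃ · r₂₄ + (1/(m²ω²)) p₁₃ · p₂₄` is a global integral of motion. -/
theorem global_integral_I (m ω : ℝ) (hm : 0 < m) (hω : 0 < ω)
    (r₁ r₂ r₃ r₄ : ℝ → Plane)
    (hsol : IsFourBodySolution ω r₁ r₂ r₃ r₄) :
    ∀ t : ℝ,
      (inner ℝ (r₁ t - r₃ t) (r₂ t - r₄ t) : ℝ)
        + (1 / (m ^ 2 * ω ^ 2))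
          * (inner ℝ (m • deriv r₁ t - m • deriv r₃ t) (m • deriv r₂ t - m • deriv r₄ t) : ℝ)
      = (inner ℝ (r₁ 0 - r₃ 0) (r₂ 0 - r₄ 0) : ℝ)
        + (1 / (m ^ 2 * ω ^ 2))
          * (inner ℝ (m • deriv r₁ 0 - m • deriv r₃ 0) (m • deriv r₂ 0 - m • deriv r₄ 0) : ℝ) := by
  obtain ⟨⟨h1, h1'⟩, ⟨h2, h2'⟩, ⟨h3, h3'⟩, ⟨h4, h4'⟩, e1, e2, e3, e4⟩ := hsol
  set F : ℝ → ℝ := fun t =>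
    (inner ℝ (r₁ t - r₃ t) (r₂ t - r₄ t) : ℝ)
      + (1 / ω ^ 2) * (inner ℝ (deriv r₁ t - deriv r₃ t) (deriv r₂ t - deriv r₄ t) : ℝ)
    with hF
  have hu'' : ∀ t, deriv (deriv r₁) t - deriv (deriv r₃) t
      = (-(ω ^ 2)) • (r₁ t - r₃ t) := by
    intro t; rw [e1 t, e3 t]; module
  have hv'' : ∀ t, deriv (deriv r₂) t - deriv (deriv r₄) t
      = (-(ω ^ 2)) • (r₂ t - r₄ t) := by
    intro t; rw [e2 t, e4 t]; module
  have key : ∀ t, HasDerivAt F 0 t := by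
    intro t
    have hu : HasDerivAt (fun t => r₁ t - r₃ t) (deriv r₁ t - deriv r₃ t) t :=
      ((h1 t).hasDerivAt).sub ((h3 t).hasDerivAt)
    have hv : HasDerivAt (fun t => r₂ t - r₄ t) (deriv r₂ t - deriv r₄ t) t :=
      ((h2 t).hasDerivAt).sub ((h4 t).hasDerivAt)
    have hu' : HasDerivAt (fun t => deriv r₁ t - deriv r₃ t)
        ((-(ω ^ 2)) • (r₁ t - r₃ t)) t := by
      rw [← hu'' t]; exact ((h1' t).hasDerivAt).sub ((h3' t).hasDerivAt)
    have hv' : HasDerivAt (fun t => deriv r₂ t - deriv r₄ t)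
        ((-(ω ^ 2)) • (r₂ t - r₄ t)) t := by
      rw [← hv'' t]; exact ((h2' t).hasDerivAt).sub ((h4' t).hasDerivAt)
    have A := hu.inner ℝ hv
    have B := (hu'.inner ℝ hv').const_mul (1 / ω ^ 2)
    have C := A.add B
    convert C using 1
    case e'_4 => rfl
    case e'_5 => rfl
    case e'_8 => rfl
    rw [real_inner_smul_left, real_inner_smul_right]
    have hω2 : ω ^ 2 ≠ 0 := pow_ne_zero 2 hω.ne'
    field_simp
    ring
  have hconst : ∀ t, F t = F 0 :=
    fun t => is_const_of_deriv_eq_zero (fun x => (key x).differentiableAt)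
      (fun x => (key x).deriv) t 0
  intro t
  have hm2 : m ≠ 0 := hm.ne'
  have hrw : ∀ s : ℝ,
      (1 / (m ^ 2 * ω ^ 2))
        * (inner ℝ (m • deriv r₁ s - m • deriv r₃ s) (m • deriv r₂ s - m • deriv r₄ s) : ℝ)
      = (1 / ω ^ 2) * (inner ℝ (deriv r₁ s - deriv r₃ s) (deriv r₂ s - deriv r₄ s) : ℝ) := by
    intro s
    rw [← smul_sub, ← smul_sub, real_inner_smul_left, real_inner_smul_right]
    field_simp
  rw [hrw t, hrw 0]
  exact hconst t
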